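/- On the event {T* > n}, the conditional expectation of the future increments of ξ under the stopping rule T* satisfies E(ξ_{T*} - ξ_n | F_n)·1{T* > n} = (Y_n - l_n)·1{T* > n} < 0 almost surely on {T* > n}, for 1 ≤ n ≤ N. -/

import Mathlib

open MeasureTheory Finset

/-- On the event `{T* > n}`, the conditional expectation of the future
increments of `ξ` under the stopping rule `T*` satisfies
`E(ξ_{T*} - ξ_n | F_n)·1{T* > n} = (Y_n - l_n)·1{T* > n} < 0` a.s. on `{T* > n}`,
for `1 ≤ n ≤ N`. -/
theorem condexp_future_increments_Tstar
    {Ω : Type*} {m0 : MeasurableSpace Ω} (μ : Measure Ω) [IsProbabilityMeasure μ]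
    (N : ℕ) (ℱ : ℕ → MeasurableSpace Ω) (hmono : Monotone ℱ) (hle : ∀ n, ℱ n ≤ m0)
    (Y v : ℕ → Ω → ℝ)
    (hY0 : Y 0 = fun _ => 0) (hYN1 : Y (N + 1) = Y N)
    (hYnn : ∀ n ω, 0 ≤ Y n ω) (hYint : ∀ n, Integrable (Y n) μ)
    (hYmeas : ∀ n, Measurable[ℱ n] (Y n))
    (hvnn : ∀ n ω, 0 ≤ v n ω) (hvint : ∀ n, Integrable (v n) μ)
    (hvmeas : ∀ k, Measurable[ℱ (k - 1)] (v k))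
    (c : ℝ) (hc : 0 < c) (l : ℕ → Ω → ℝ)
    (hlN1 : l (N + 1) = fun _ => 0)
    (hlN : l N = fun ω => c * v (N + 1) ω)
    (hlrec : ∀ n < N, l n =ᵐ[μ] fun ω =>
      c * v (n + 1) ω + (μ[fun ω' => max (l (n + 1) ω' - Y (n + 1) ω') 0 | ℱ n]) ω)
    (Tstar : Ω → ℕ)
    (hTstar : ∀ ω, Tstar ω = sInf {n | 1 ≤ n ∧ n ≤ N + 1 ∧ l n ω ≤ Y n ω}) :
    ∀ n, 1 ≤ n → n ≤ N →
      ∀ᵐ ω ∂μ, n < Tstar ω →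
        ((μ[fun ω' => (∑ k ∈ Finset.Icc 1 (Tstar ω'), (Y (k - 1) ω' - c * v k ω'))
              - ∑ k ∈ Finset.Icc 1 n, (Y (k - 1) ω' - c * v k ω') | ℱ n]) ω
            = Y n ω - l n ω
          ∧ Y n ω - l n ω < 0) := by
  classical
  -- the partial sums ξ
  let ξ : ℕ → Ω → ℝ := fun m ω => ∑ k ∈ Finset.Icc 1 m, (Y (k - 1) ω - c * v k ω)
  have hξint : ∀ m, Integrable (ξ m) μ := fun m =>
    integrable_finset_sum _ fun k _ => (hYint _).sub ((hvint k).const_mul c)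
  -- a measurable modification l' of l
  let l' : ℕ → Ω → ℝ := fun m =>
    if m = N + 1 then fun _ => 0
    else if m = N then fun ω => c * v (N + 1) ω
    else fun ω => c * v (m + 1) ω +
      (μ[fun ω' => max (l (m + 1) ω' - Y (m + 1) ω') 0 | ℱ m]) ω
  have hl'N1 : l' (N + 1) = fun _ => 0 := by simp [l']
  have hl'N : l' N = fun ω => c * v (N + 1) ω := by
    show (if N = N + 1 then _ else if N = N then _ else _) = _
    rw [if_neg (by omega : ¬ N = N + 1), if_pos rfl]
  have hl'lt : ∀ m, m ≠ N + 1 → m ≠ N → l' m = fun ω => c * v (m + 1) ω +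
      (μ[fun ω' => max (l (m + 1) ω' - Y (m + 1) ω') 0 | ℱ m]) ω := by
    intro m h1 h2
    show (if m = N + 1 then _ else if m = N then _ else _) = _
    rw [if_neg h1, if_neg h2]
  have hl'meas : ∀ m, StronglyMeasurable[ℱ m] (l' m) := by
    intro m
    by_cases h1 : m = N + 1
    · simp only [l', h1, if_pos rfl]; exact stronglyMeasurable_const
    · by_cases h2 : m = N
      · subst h2
        rw [hl'N]
        exact (((hvmeas (m + 1)).const_mul c).stronglyMeasurable)
      · rw [hl'lt m h1 h2]
        exact (((hvmeas (m + 1)).const_mul c).stronglyMeasurable).add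
          stronglyMeasurable_condExp
  have hl'int : ∀ m, Integrable (l' m) μ := by
    intro m
    by_cases h1 : m = N + 1
    · subst h1; rw [hl'N1]; exact integrable_const 0
    · by_cases h2 : m = N
      · rw [h2, hl'N]; exact (hvint (N + 1)).const_mul c
      · rw [hl'lt m h1 h2]
        exact ((hvint (m + 1)).const_mul c).add integrable_condExp
  have hl'ae : ∀ m, m ≤ N + 1 → l' m =ᵐ[μ] l m := by
    intro m hm
    by_cases h1 : m = N + 1
    · subst h1; rw [hl'N1, hlN1]
    · by_cases h2 : m = N
      · subst h2; rw [hl'N, hlN]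
      · have hmN : m < N := by omega
        rw [hl'lt m h1 h2]
        exact (hlrec m hmN).symm
  -- the recursion for l', valid for all n ≤ N
  have hrec' : ∀ n, n ≤ N → l' n =ᵐ[μ] fun ω =>
      c * v (n + 1) ω + (μ[fun ω' => max (l' (n + 1) ω' - Y (n + 1) ω') 0 | ℱ n]) ω := by
    intro n hn
    by_cases h2 : n = N
    · subst h2
      have hzero : (fun ω' => max (l' (n + 1) ω' - Y (n + 1) ω') 0) = (0 : Ω → ℝ) := by
        funext ω'
        rw [hl'N1]
        simp only [Pi.zero_apply]
        exact max_eq_right (by simpa using hYnn (n + 1) ω')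
      rw [hzero, condExp_zero, hl'N]
      filter_upwards with ω
      simp
    · have h1 : ¬ n = N + 1 := by omega
      have heq : (fun ω' => max (l (n + 1) ω' - Y (n + 1) ω') 0)
          =ᵐ[μ] fun ω' => max (l' (n + 1) ω' - Y (n + 1) ω') 0 := by
        filter_upwards [hl'ae (n + 1) (by omega)] with ω h
        rw [h]
      have := condExp_congr_ae (m := ℱ n) (μ := μ) heq
      rw [hl'lt n h1 h2]
      filter_upwards [this] with ω hω
      rw [hω]
  -- the modified stopping rule
  let S : Ω → Set ℕ := fun ω => {m | 1 ≤ m ∧ m ≤ N + 1 ∧ l' m ω ≤ Y m ω}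
  let T' : Ω → ℕ := fun ω => sInf (S ω)
  have hSne : ∀ ω, N + 1 ∈ S ω := by
    intro ω
    refine ⟨by omega, le_refl _, ?_⟩
    rw [hl'N1]; exact hYnn (N + 1) ω
  have hT'mem : ∀ ω, T' ω ∈ S ω := fun ω => Nat.sInf_mem ⟨N + 1, hSne ω⟩
  have hT'le : ∀ ω, T' ω ≤ N + 1 := fun ω => Nat.sInf_le (hSne ω)
  have hT'gt : ∀ ω k, k < T' ω ↔ ∀ m, m ≤ k → m ∉ S ω := by
    intro ω k
    constructor
    · intro h m hm hmem
      exact absurd h (not_lt.2 (le_trans (Nat.sInf_le hmem) hm))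
    · intro h
      by_contra hk
      exact h (T' ω) (by omega) (hT'mem ω)
  -- Tstar agrees with T' almost everywhere
  have hll : ∀ᵐ ω ∂μ, ∀ m, m ≤ N + 1 → l' m ω = l m ω := by
    rw [MeasureTheory.ae_all_iff]
    intro m
    by_cases hm : m ≤ N + 1
    · filter_upwards [hl'ae m hm] with ω h _
      exact h
    · filter_upwards with ω h
      exact absurd h hm
  have hTeq : ∀ᵐ ω ∂μ, Tstar ω = T' ω := by
    filter_upwards [hll] with ω h
    rw [hTstar ω]
    congr 1
    ext m
    simp only [S, Set.mem_setOf_eq]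
    constructor
    · rintro ⟨h1, h2, h3⟩; exact ⟨h1, h2, by rw [h m h2]; exact h3⟩
    · rintro ⟨h1, h2, h3⟩; exact ⟨h1, h2, by rw [← h m h2]; exact h3⟩
  -- the events {T' > k}
  let A : ℕ → Set Ω := fun k => {ω | k < T' ω}
  have hAiff : ∀ k, k ≤ N → ∀ ω, ω ∈ A k ↔ ∀ m ∈ Finset.Icc 1 k, Y m ω < l' m ω := by
    intro k hk ω
    rw [Set.mem_setOf_eq, hT'gt]
    constructor
    · intro h m hm
      rw [Finset.mem_Icc] at hm
      by_contra hcon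
      exact h m hm.2 ⟨hm.1, by omega, not_lt.1 hcon⟩
    · rintro h m hm ⟨h1, h2, h3⟩
      exact absurd h3 (not_le.2 (h m (Finset.mem_Icc.2 ⟨h1, hm⟩)))
  have hAmeasF : ∀ k, k ≤ N → MeasurableSet[ℱ k] (A k) := by
    intro k hk
    have : A k = ⋂ m ∈ Finset.Icc 1 k, {ω | Y m ω < l' m ω} := by
      ext ω
      simp only [Set.mem_iInter]
      exact hAiff k hk ω
    rw [this]
    refine Finset.measurableSet_biInter _ ?_
    intro m hm
    rw [Finset.mem_Icc] at hm
    exact measurableSet_lt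
      ((hYmeas m).mono (hmono hm.2) le_rfl)
      (((hl'meas m).measurable).mono (hmono hm.2) le_rfl)
  have hAN1 : A (N + 1) = ∅ := by
    ext ω
    simp only [A, Set.mem_setOf_eq, Set.mem_empty_iff_false, iff_false, not_lt]
    exact hT'le ω
  have hAmeas0 : ∀ k, k ≤ N + 1 → MeasurableSet (A k) := by
    intro k hk
    rcases Nat.lt_or_ge k (N + 1) with h | h
    · exact hle k _ (hAmeasF k (by omega))
    · have : k = N + 1 := by omega
      rw [this, hAN1]; exact MeasurableSet.empty
  -- {T' = m} is measurable
  have hTm : ∀ m, 1 ≤ m → m ≤ N + 1 → MeasurableSet {ω | T' ω = m} := by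
    intro m h1 h2
    have : {ω | T' ω = m} = A (m - 1) \ A m := by
      ext ω
      simp only [Set.mem_setOf_eq, Set.mem_diff, A]
      omega
    rw [this]
    exact (hAmeas0 (m - 1) (by omega)).diff (hAmeas0 m h2)
  -- ξ stopped at T' is integrable
  let f' : Ω → ℝ := fun ω => ξ (T' ω) ω
  have hf'sum : f' = fun ω => ∑ m ∈ Finset.Icc 1 (N + 1),
      Set.indicator {ω' | T' ω' = m} (ξ m) ω := by
    funext ω
    rw [Finset.sum_eq_single (T' ω)]
    · rw [Set.indicator_of_mem (by exact rfl)]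
    · intro m _ hm
      exact Set.indicator_of_notMem (fun h => hm (h.symm)) _
    · intro h
      exact absurd (Finset.mem_Icc.2 ⟨(hT'mem ω).1, hT'le ω⟩) h
  have hf'int : Integrable f' μ := by
    rw [hf'sum]
    exact integrable_finset_sum _ fun m hm => (hξint m).indicator
      (hTm m (Finset.mem_Icc.1 hm).1 (Finset.mem_Icc.1 hm).2)
  -- the truncated future-increment process
  let Z : ℕ → Ω → ℝ := fun n => (A n).indicator (fun ω => f' ω - ξ n ω)
  have hZint : ∀ n, n ≤ N + 1 → Integrable (Z n) μ := fun n hn =>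
    (hf'int.sub (hξint n)).indicator (hAmeas0 n hn)
  have hstep : ∀ n ω, ξ (n + 1) ω - ξ n ω = Y n ω - c * v (n + 1) ω := by
    intro n ω
    have := Finset.sum_Icc_succ_top (a := 1) (b := n) (by omega)
      (fun k => Y (k - 1) ω - c * v k ω)
    simp only [ξ, this, Nat.add_sub_cancel]
    ring
  have hZrec : ∀ n, n ≤ N → ∀ ω,
      Z n ω = (A n).indicator (fun ω => Y n ω - c * v (n + 1) ω) ω + Z (n + 1) ω := by
    intro n hn ω
    simp only [Z]
    by_cases h1 : n < T' ω
    · have hmemA : ω ∈ A n := h1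
      rw [Set.indicator_of_mem hmemA, Set.indicator_of_mem hmemA]
      by_cases h2 : n + 1 < T' ω
      · rw [Set.indicator_of_mem (show ω ∈ A (n + 1) from h2)]
        have := hstep n ω
        linarith
      · have hT : T' ω = n + 1 := by
          have := hT'mem ω
          omega
        rw [Set.indicator_of_notMem (show ω ∉ A (n + 1) from h2)]
        have h3 : f' ω = ξ (n + 1) ω := by simp only [f', hT]
        rw [h3]
        have := hstep n ω
        linarith
    · have h2 : ¬ n + 1 < T' ω := by omega
      rw [Set.indicator_of_notMem (show ω ∉ A n from h1),
        Set.indicator_of_notMem (show ω ∉ A n from h1),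
        Set.indicator_of_notMem (show ω ∉ A (n + 1) from h2)]
      ring
  -- the key conditional expectation computation, by downward induction
  have base : μ[Z (N + 1) | ℱ (N + 1)] =ᵐ[μ]
      (A (N + 1)).indicator (fun ω => Y (N + 1) ω - l' (N + 1) ω) := by
    have hZ0 : Z (N + 1) = 0 := by
      simp only [Z]
      rw [hAN1]
      exact Set.indicator_empty _
    rw [hZ0, condExp_zero, hAN1]
    filter_upwards with ω
    simp
  have step : ∀ n, n ≤ N →
      (μ[Z (n + 1) | ℱ (n + 1)] =ᵐ[μ]
        (A (n + 1)).indicator (fun ω => Y (n + 1) ω - l' (n + 1) ω)) →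
      (μ[Z n | ℱ n] =ᵐ[μ] (A n).indicator (fun ω => Y n ω - l' n ω)) := by
    intro n hn IH
    set g : Ω → ℝ := fun ω => max (l' (n + 1) ω - Y (n + 1) ω) 0 with hg
    have hgint : Integrable g μ := by
      have : Integrable (fun ω => l' (n + 1) ω - Y (n + 1) ω) μ :=
        (hl'int (n + 1)).sub (hYint (n + 1))
      exact this.pos_part
    -- pointwise identity relating the (n+1)-indicator to the n-indicator
    have hptws : (A (n + 1)).indicator (fun ω => Y (n + 1) ω - l' (n + 1) ω)
        = - (A n).indicator g := by
      funext ω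
      rw [Pi.neg_apply]
      by_cases h1 : n + 1 < T' ω
      · have hA1 : ω ∈ A (n + 1) := h1
        have hA0 : ω ∈ A n := show n < T' ω by omega
        rw [Set.indicator_of_mem hA1, Set.indicator_of_mem hA0]
        have hnot : (n + 1) ∉ S ω := ((hT'gt ω (n + 1)).1 h1) (n + 1) le_rfl
        have hlt : Y (n + 1) ω < l' (n + 1) ω := by
          by_contra hcon
          exact hnot ⟨by omega, by omega, not_lt.1 hcon⟩
        have : g ω = l' (n + 1) ω - Y (n + 1) ω :=
          max_eq_left (by linarith)
        rw [this]; ring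
      · rw [Set.indicator_of_notMem (show ω ∉ A (n + 1) from h1)]
        by_cases h2 : n < T' ω
        · have hT : T' ω = n + 1 := by
            have := hT'mem ω; omega
          have hmem : (n + 1) ∈ S ω := hT ▸ hT'mem ω
          have : g ω = 0 := max_eq_right (by linarith [hmem.2.2])
          rw [Set.indicator_of_mem (show ω ∈ A n from h2), this]
          ring
        · rw [Set.indicator_of_notMem (show ω ∉ A n from h2)]
          ring
    -- rewrite Z n
    have hZn : Z n = (fun ω => (A n).indicator (fun ω' => Y n ω' - c * v (n + 1) ω') ω)
        + Z (n + 1) := by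
      funext ω
      exact hZrec n hn ω
    have hind_int : Integrable ((A n).indicator (fun ω' => Y n ω' - c * v (n + 1) ω')) μ :=
      ((hYint n).sub ((hvint (n + 1)).const_mul c)).indicator (hAmeas0 n (by omega))
    have hind_sm : StronglyMeasurable[ℱ n]
        ((A n).indicator (fun ω' => Y n ω' - c * v (n + 1) ω')) :=
      (((hYmeas n).sub ((hvmeas (n + 1)).const_mul c)).stronglyMeasurable).indicator
        (hAmeasF n hn)
    calc μ[Z n | ℱ n]
        =ᵐ[μ] μ[(A n).indicator (fun ω' => Y n ω' - c * v (n + 1) ω') | ℱ n]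
            + μ[Z (n + 1) | ℱ n] := by
          rw [hZn]
          exact condExp_add hind_int (hZint (n + 1) (by omega)) (ℱ n)
      _ =ᵐ[μ] (fun ω => (A n).indicator (fun ω' => Y n ω' - c * v (n + 1) ω') ω)
            + μ[Z (n + 1) | ℱ n] := by
          rw [condExp_of_stronglyMeasurable (hle n) hind_sm hind_int]
      _ =ᵐ[μ] (fun ω => (A n).indicator (fun ω' => Y n ω' - c * v (n + 1) ω') ω)
            + fun ω => - (A n).indicator (μ[g | ℱ n]) ω := by
          refine Filter.EventuallyEq.add (Filter.EventuallyEq.refl _ _) ?_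
          calc μ[Z (n + 1) | ℱ n]
              =ᵐ[μ] μ[μ[Z (n + 1) | ℱ (n + 1)] | ℱ n] :=
                (condExp_condExp_of_le (hmono (Nat.le_succ n)) (hle (n + 1))).symm
            _ =ᵐ[μ] μ[(A (n + 1)).indicator (fun ω => Y (n + 1) ω - l' (n + 1) ω) | ℱ n] :=
                condExp_congr_ae IH
            _ =ᵐ[μ] μ[- (A n).indicator g | ℱ n] := by rw [hptws]
            _ =ᵐ[μ] - μ[(A n).indicator g | ℱ n] := condExp_neg _ (ℱ n)
            _ =ᵐ[μ] fun ω => - (A n).indicator (μ[g | ℱ n]) ω := by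
                filter_upwards [condExp_indicator (m := ℱ n) hgint (hAmeasF n hn)]
                  with ω hω
                rw [Pi.neg_apply, hω]
      _ =ᵐ[μ] (A n).indicator (fun ω => Y n ω - l' n ω) := by
          filter_upwards [hrec' n hn] with ω hω
          by_cases hA : ω ∈ A n
          · simp only [Pi.add_apply, Set.indicator_of_mem hA]
            rw [hω]
            ring
          · simp only [Pi.add_apply, Set.indicator_of_notMem hA]
            ring
  have main : ∀ d, μ[Z (N + 1 - d) | ℱ (N + 1 - d)] =ᵐ[μ]
      (A (N + 1 - d)).indicator (fun ω => Y (N + 1 - d) ω - l' (N + 1 - d) ω) := by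
    intro d
    induction d with
    | zero => simpa using base
    | succ d IH =>
      rcases le_or_gt (N + 1) d with h | h
      · have h1 : N + 1 - (d + 1) = N + 1 - d := by omega
        rw [h1]; exact IH
      · have h1 : N + 1 - (d + 1) = N - d := by omega
        have h2 : N - d + 1 = N + 1 - d := by omega
        rw [h1]
        exact step (N - d) (by omega) (by rw [h2]; exact IH)
  have hcond : ∀ n, n ≤ N → μ[Z n | ℱ n] =ᵐ[μ]
      (A n).indicator (fun ω => Y n ω - l' n ω) := by
    intro n hn
    have := main (N + 1 - n)
    rwa [show N + 1 - (N + 1 - n) = n by omega] at this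
  -- conclude
  intro n h1 hnN
  have hfun : (fun ω' => (∑ k ∈ Finset.Icc 1 (Tstar ω'), (Y (k - 1) ω' - c * v k ω'))
      - ∑ k ∈ Finset.Icc 1 n, (Y (k - 1) ω' - c * v k ω'))
      = fun ω' => ξ (Tstar ω') ω' - ξ n ω' := rfl
  have hfae : (fun ω' => ξ (Tstar ω') ω' - ξ n ω') =ᵐ[μ] fun ω' => f' ω' - ξ n ω' := by
    filter_upwards [hTeq] with ω h
    simp only [f', h]
  have hcondeq : μ[fun ω' => ξ (Tstar ω') ω' - ξ n ω' | ℱ n]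
      =ᵐ[μ] μ[fun ω' => f' ω' - ξ n ω' | ℱ n] := condExp_congr_ae hfae
  have hindchain : (A n).indicator (μ[fun ω' => f' ω' - ξ n ω' | ℱ n])
      =ᵐ[μ] (A n).indicator (fun ω => Y n ω - l' n ω) := by
    have h1' : μ[(A n).indicator (fun ω' => f' ω' - ξ n ω') | ℱ n]
        =ᵐ[μ] (A n).indicator (μ[fun ω' => f' ω' - ξ n ω' | ℱ n]) :=
      condExp_indicator (m := ℱ n) (hf'int.sub (hξint n)) (hAmeasF n hnN)
    have h2' : μ[Z n | ℱ n] =ᵐ[μ] (A n).indicator (fun ω => Y n ω - l' n ω) :=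
      hcond n hnN
    exact h1'.symm.trans h2'
  rw [hfun]
  filter_upwards [hcondeq, hindchain, hll, hTeq] with ω hce hic hlω hTω hgt
  have hT'gtn : n < T' ω := by rw [← hTω]; exact hgt
  have hA : ω ∈ A n := hT'gtn
  have hnotmem : n ∉ S ω := (hT'gt ω n).1 hT'gtn n le_rfl
  have hlt : Y n ω < l' n ω := by
    by_contra hcon
    exact hnotmem ⟨h1, by omega, not_lt.1 hcon⟩
  have hl'l : l' n ω = l n ω := hlω n (by omega)
  constructor
  · rw [hce]
    rw [Set.indicator_of_mem hA] at hic
    rw [hic, Set.indicator_of_mem hA]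
    show Y n ω - l' n ω = Y n ω - l n ω
    rw [hl'l]
  · rw [← hl'l]
    linarith
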